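/- Let P be a non-trivial product distribution on {0,1}^n (independent coordinates with 0 < p_j = Pr[z_j = 1] < 1 for all j). If A ⊆ {0,1}^n is an antichain with respect to the coordinatewise partial order, then the sum over ℓ ∈ {0,1,...,n} of the conditional probabilities Pr_{z∼P}[z ∈ A | |z| = ℓ] is at most 1. -/

import Mathlib

open Finset

/-- The probability that a sample from the product distribution on `{0,1}^n`
with parameters `p` equals the indicator vector of the set `s ⊆ [n]`. -/
def prodWeight {n : ℕ} (p : Fin n → ℝ) (s : Finset (Fin n)) : ℝ :=
  (∏ j ∈ s, p j) * ∏ j ∈ sᶜ, (1 - p j)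

namespace LymAux

variable {ι : Type*} [DecidableEq ι]

/-- weight of a subset `s` of the ground set `E`. -/
def lw (p : ι → ℝ) (E s : Finset ι) : ℝ :=
  (∏ j ∈ s, p j) * ∏ j ∈ E \ s, (1 - p j)

/-- total weight of level `ℓ`. -/
def lv (p : ι → ℝ) (E : Finset ι) (ℓ : ℕ) : ℝ :=
  ∑ s ∈ E.powerset.filter (fun s => s.card = ℓ), lw p E s

lemma lw_pos {p : ι → ℝ} {E s : Finset ι} (hp : ∀ j ∈ E, 0 < p j ∧ p j < 1)
    (hs : s ⊆ E) : 0 < lw p E s := by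
  refine mul_pos (Finset.prod_pos fun j hj => (hp j (hs hj)).1)
    (Finset.prod_pos fun j hj => ?_)
  have := hp j (Finset.mem_sdiff.1 hj).1
  linarith [this.2]

lemma lw_nonneg {p : ι → ℝ} {E s : Finset ι} (hp : ∀ j ∈ E, 0 < p j ∧ p j < 1)
    (hs : s ⊆ E) : 0 ≤ lw p E s := (lw_pos hp hs).le

lemma lv_pos {p : ι → ℝ} {E : Finset ι} (hp : ∀ j ∈ E, 0 < p j ∧ p j < 1)
    {ℓ : ℕ} (hℓ : ℓ ≤ E.card) : 0 < lv p E ℓ := by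
  obtain ⟨t, htE, htc⟩ := Finset.exists_subset_card_eq hℓ
  refine Finset.sum_pos (fun s hs => ?_) ⟨t, ?_⟩
  · simp only [Finset.mem_filter, Finset.mem_powerset] at hs
    exact lw_pos hp hs.1
  · simp [Finset.mem_filter, Finset.mem_powerset, htE, htc]

lemma lv_nonneg {p : ι → ℝ} {E : Finset ι} (hp : ∀ j ∈ E, 0 < p j ∧ p j < 1)
    (ℓ : ℕ) : 0 ≤ lv p E ℓ := by
  refine Finset.sum_nonneg fun s hs => ?_
  simp only [Finset.mem_filter, Finset.mem_powerset] at hs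
  exact lw_nonneg hp hs.1

lemma lv_eq_zero {p : ι → ℝ} {E : Finset ι} {ℓ : ℕ} (hℓ : E.card < ℓ) :
    lv p E ℓ = 0 := by
  unfold lv
  rw [Finset.filter_false_of_mem, Finset.sum_empty]
  intro s hs h
  rw [Finset.mem_powerset] at hs
  exact absurd (h ▸ Finset.card_le_card hs) (by omega)

lemma lv_succ_eq_zero {p : ι → ℝ} {E : Finset ι}
    (hp : ∀ j ∈ E, 0 < p j ∧ p j < 1) {m : ℕ} (h : lv p E m = 0) :
    lv p E (m + 1) = 0 := by
  by_cases hm : m ≤ E.card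
  · exact absurd h (lv_pos hp hm).ne'
  · exact lv_eq_zero (by omega)

lemma lw_insert_not_mem {p : ι → ℝ} {E s : Finset ι} {a : ι} (ha : a ∉ E)
    (hs : s ⊆ E) : lw p (insert a E) s = (1 - p a) * lw p E s := by
  have has : a ∉ s := fun h => ha (hs h)
  unfold lw
  rw [Finset.insert_sdiff_of_notMem _ has,
    Finset.prod_insert (fun h => ha (Finset.mem_sdiff.1 h).1)]
  ring

lemma lw_insert_mem {p : ι → ℝ} {E s : Finset ι} {a : ι} (ha : a ∉ E)
    (hs : s ⊆ E) : lw p (insert a E) (insert a s) = p a * lw p E s := by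
  have has : a ∉ s := fun h => ha (hs h)
  have hsd : insert a E \ insert a s = E \ s := by
    ext j
    simp only [Finset.mem_sdiff, Finset.mem_insert]
    constructor
    · rintro ⟨h1 | h1, h2⟩
      · exact absurd (Or.inl h1) h2
      · exact ⟨h1, fun hj => h2 (Or.inr hj)⟩
    · rintro ⟨h1, h2⟩
      exact ⟨Or.inr h1, fun hj => by
        rcases hj with hj | hj
        · exact ha (hj ▸ h1)
        · exact h2 hj⟩
  unfold lw
  rw [hsd, Finset.prod_insert has]
  ring

lemma lv_zero_eq {p : ι → ℝ} (E : Finset ι) : lv p E 0 = lw p E ∅ := by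
  unfold lv
  have : E.powerset.filter (fun s => s.card = 0) = {∅} := by
    ext s
    simp only [Finset.mem_filter, Finset.mem_powerset, Finset.mem_singleton,
      Finset.card_eq_zero]
    exact ⟨fun h => h.2, fun h => ⟨h ▸ Finset.empty_subset E, h⟩⟩
  rw [this, Finset.sum_singleton]

lemma lv_insert_zero {p : ι → ℝ} {E : Finset ι} {a : ι} (ha : a ∉ E) :
    lv p (insert a E) 0 = (1 - p a) * lv p E 0 := by
  rw [lv_zero_eq, lv_zero_eq, lw_insert_not_mem ha (Finset.empty_subset E)]

lemma lv_insert_succ {p : ι → ℝ} {E : Finset ι} {a : ι} (ha : a ∉ E) (ℓ : ℕ) :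
    lv p (insert a E) (ℓ + 1)
      = (1 - p a) * lv p E (ℓ + 1) + p a * lv p E ℓ := by
  unfold lv
  rw [Finset.sum_filter, Finset.sum_filter, Finset.sum_filter,
    Finset.sum_powerset_insert ha]
  have h1 : ∑ s ∈ E.powerset,
      (if s.card = ℓ + 1 then lw p (insert a E) s else 0)
      = (1 - p a) * ∑ s ∈ E.powerset, (if s.card = ℓ + 1 then lw p E s else 0) := by
    rw [Finset.mul_sum]
    refine Finset.sum_congr rfl fun s hs => ?_
    rw [Finset.mem_powerset] at hs
    rw [lw_insert_not_mem ha hs, mul_ite, mul_zero]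
  have h2 : ∑ s ∈ E.powerset,
      (if (insert a s).card = ℓ + 1 then lw p (insert a E) (insert a s) else 0)
      = p a * ∑ s ∈ E.powerset, (if s.card = ℓ then lw p E s else 0) := by
    rw [Finset.mul_sum]
    refine Finset.sum_congr rfl fun s hs => ?_
    rw [Finset.mem_powerset] at hs
    have has : a ∉ s := fun h => ha (hs h)
    rw [Finset.card_insert_of_notMem has, lw_insert_mem ha hs, mul_ite, mul_zero]
    simp only [Nat.add_right_cancel_iff]
  rw [h1, h2]

/-- log-concavity (Newton's inequality) of the level weights. -/
lemma lv_logConcave {p : ι → ℝ} {E : Finset ι}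
    (hp : ∀ j ∈ E, 0 < p j ∧ p j < 1) :
    ∀ ℓ : ℕ, lv p E ℓ * lv p E (ℓ + 2) ≤ lv p E (ℓ + 1) ^ 2 := by
  induction E using Finset.induction_on with
  | empty =>
    intro ℓ
    have h2 : lv p (∅ : Finset ι) (ℓ + 2) = 0 := lv_eq_zero (by simp)
    rw [h2, mul_zero]
    positivity
  | @insert a E ha IH =>
    have hpE : ∀ j ∈ E, 0 < p j ∧ p j < 1 := fun j hj => hp j (Finset.mem_insert_of_mem hj)
    have hpa := hp a (Finset.mem_insert_self a E)
    have IH' := IH hpE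
    have hx : (0:ℝ) ≤ 1 - p a := by linarith [hpa.2]
    have hπ : (0:ℝ) ≤ p a := hpa.1.le
    have hnn : ∀ m, 0 ≤ lv p E m := lv_nonneg hpE
    -- the "middle" inequality
    have hmid : ∀ ℓ : ℕ, lv p E ℓ * lv p E (ℓ + 3) ≤ lv p E (ℓ + 1) * lv p E (ℓ + 2) := by
      intro ℓ
      rcases (mul_nonneg (hnn (ℓ+1)) (hnn (ℓ+2))).eq_or_lt' with h | h
      · have h3 : lv p E (ℓ + 3) = 0 := by
          rcases mul_eq_zero.1 h with h0 | h0
          · exact lv_succ_eq_zero hpE (lv_succ_eq_zero hpE h0)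
          · exact lv_succ_eq_zero hpE h0
        rw [h3, mul_zero]
        exact mul_nonneg (hnn (ℓ+1)) (hnn (ℓ+2))
      · have k1 := IH' ℓ
        have k2 := IH' (ℓ + 1)
        have : lv p E ℓ * lv p E (ℓ+3) * (lv p E (ℓ+1) * lv p E (ℓ+2))
            ≤ (lv p E (ℓ+1) * lv p E (ℓ+2)) * (lv p E (ℓ+1) * lv p E (ℓ+2)) := by
          have := mul_le_mul k1 k2 (mul_nonneg (hnn (ℓ+1)) (hnn (ℓ+3)))
            (sq_nonneg _)
          nlinarith [hnn ℓ, hnn (ℓ+1), hnn (ℓ+2), hnn (ℓ+3)]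
        exact le_of_mul_le_mul_right (by linarith) h
    intro ℓ
    match ℓ with
    | 0 =>
      rw [lv_insert_zero ha, lv_insert_succ ha 1, lv_insert_succ ha 0]
      norm_num
      nlinarith [mul_le_mul_of_nonneg_left (IH' 0) (mul_nonneg hx hx),
        mul_nonneg (mul_nonneg (mul_nonneg hx hπ) (hnn 0)) (hnn 1),
        sq_nonneg (p a * lv p E 0)]
    | (m + 1) =>
      rw [lv_insert_succ ha m, lv_insert_succ ha (m + 2), lv_insert_succ ha (m + 1),
        show m + 1 + 1 = m + 2 from rfl, show m + 2 + 1 = m + 3 from rfl]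
      nlinarith [mul_le_mul_of_nonneg_left (IH' m) (mul_nonneg hπ hπ),
        mul_le_mul_of_nonneg_left (IH' (m + 1)) (mul_nonneg hx hx),
        mul_le_mul_of_nonneg_left (hmid m) (mul_nonneg hx hπ)]

end LymAux

namespace LymAux

variable {ι : Type*} [DecidableEq ι]

lemma telescope (g : ℕ → ℝ) {ℓ m : ℕ} (h : ℓ ≤ m) :
    ∑ k ∈ Finset.Ico ℓ m, (g k - g (k + 1)) = g ℓ - g m := by
  induction m, h using Nat.le_induction with
  | base => simp
  | succ m hm IH => rw [Finset.sum_Ico_succ_top hm, IH]; ring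

theorem main (p : ι → ℝ) : ∀ E : Finset ι, (∀ j ∈ E, 0 < p j ∧ p j < 1) →
    ∀ A : Finset (Finset ι), A ⊆ E.powerset →
    IsAntichain (· ⊆ ·) (A : Set (Finset ι)) →
    ∑ s ∈ A, lw p E s / lv p E s.card ≤ 1 := by
  intro E
  induction E using Finset.induction_on with
  | empty =>
    intro _ A hAE hA
    have hsub : A ⊆ {∅} := by
      intro s hs
      have := hAE hs
      simp only [Finset.mem_powerset, Finset.subset_empty] at this
      simp [this]
    calc ∑ s ∈ A, lw p ∅ s / lv p ∅ s.card
        ≤ ∑ s ∈ ({∅} : Finset (Finset ι)), lw p ∅ s / lv p ∅ s.card := by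
          refine Finset.sum_le_sum_of_subset_of_nonneg hsub fun s hs _ => ?_
          simp only [Finset.mem_singleton] at hs
          subst hs
          simp [lv_zero_eq, lw]
      _ = 1 := by simp [lv_zero_eq, lw]
  | @insert a E ha IH =>
    intro hp A hAE hA
    have hpE : ∀ j ∈ E, 0 < p j ∧ p j < 1 := fun j hj => hp j (Finset.mem_insert_of_mem hj)
    have hpa := hp a (Finset.mem_insert_self a E)
    have hx : (0:ℝ) < 1 - p a := by linarith [hpa.2]
    have hπ : (0:ℝ) < p a := hpa.1
    have hcard' : (insert a E).card = E.card + 1 := Finset.card_insert_of_notMem ha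
    set N := E.card + 1 with hN
    set g : ℕ → ℝ := fun ℓ => (1 - p a) * lv p E ℓ / lv p (insert a E) ℓ with hgdef
    set β : ℕ → ℝ := fun k => g k - g (k + 1) with hβdef
    have hlvpos : ∀ ℓ : ℕ, ℓ ≤ E.card → 0 < lv p E ℓ := fun ℓ h => lv_pos hpE h
    have hlv'pos : ∀ ℓ : ℕ, ℓ ≤ N → 0 < lv p (insert a E) ℓ := fun ℓ h =>
      lv_pos hp (by omega)
    have hg0 : g 0 = 1 := by
      simp only [hgdef]
      rw [lv_insert_zero ha]
      exact div_self (mul_pos hx (hlvpos 0 (Nat.zero_le _))).ne'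
    have hgN : g N = 0 := by
      simp only [hgdef]
      rw [lv_eq_zero (show E.card < N by omega), mul_zero, zero_div]
    have hgnn : ∀ ℓ, 0 ≤ g ℓ := fun ℓ => by
      simp only [hgdef]
      exact div_nonneg (mul_nonneg hx.le (lv_nonneg hpE ℓ)) (lv_nonneg hp ℓ)
    have hβnn : ∀ k, 0 ≤ β k := by
      intro k
      simp only [hβdef, sub_nonneg, hgdef]
      by_cases hk : k + 1 ≤ E.card
      · have w1 : 0 < lv p E k := hlvpos k (by omega)
        have w2 : 0 < lv p E (k + 1) := hlvpos (k + 1) hk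
        have w1' : 0 < lv p (insert a E) k := hlv'pos k (by omega)
        have w2' : 0 < lv p (insert a E) (k + 1) := hlv'pos (k + 1) (by omega)
        rw [div_le_div_iff₀ w2' w1']
        rw [lv_insert_succ ha k]
        match k with
        | 0 =>
          rw [lv_insert_zero ha]
          nlinarith [mul_nonneg (mul_nonneg hx.le hπ.le)
            (mul_nonneg (lv_nonneg hpE 0) (lv_nonneg hpE 0))]
        | (m + 1) =>
          rw [lv_insert_succ ha m, show m + 1 + 1 = m + 2 from rfl]
          nlinarith [mul_le_mul_of_nonneg_left (lv_logConcave hpE m)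
            (mul_nonneg hx.le hπ.le), mul_nonneg (mul_nonneg hx.le hx.le)
            (mul_nonneg (lv_nonneg hpE (m+1)) (lv_nonneg hpE (m+2)))]
      · rw [lv_eq_zero (show E.card < k + 1 by omega), mul_zero, zero_div]
        exact div_nonneg (mul_nonneg hx.le (lv_nonneg hpE k)) (lv_nonneg hp k)
    have tele : ∀ ℓ : ℕ, ℓ ≤ N → ∑ k ∈ Finset.Ico ℓ N, β k = g ℓ := by
      intro ℓ h
      simp only [hβdef]
      rw [telescope g h, hgN, sub_zero]
    have hsumβ : ∑ k ∈ Finset.range N, β k = 1 := by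
      rw [Finset.range_eq_Ico, tele 0 (by omega), hg0]
    -- pointwise identities
    have key0 : ∀ s ∈ A.filter (fun s => a ∉ s),
        lw p (insert a E) s / lv p (insert a E) s.card
          = (lw p E s / lv p E s.card) * ∑ k ∈ Finset.Ico s.card N, β k := by
      intro s hs
      simp only [Finset.mem_filter] at hs
      have hsE : s ⊆ E := by
        have := Finset.mem_powerset.1 (hAE hs.1)
        exact (Finset.subset_insert_iff_of_notMem hs.2).1 this
      have hc : s.card ≤ E.card := Finset.card_le_card hsE
      rw [tele s.card (by omega), lw_insert_not_mem ha hsE]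
      simp only [hgdef]
      have w : lv p E s.card ≠ 0 := (hlvpos _ hc).ne'
      have w' : lv p (insert a E) s.card ≠ 0 := (hlv'pos _ (by omega)).ne'
      field_simp
    have key1 : ∀ s ∈ A.filter (fun s => a ∈ s),
        lw p (insert a E) s / lv p (insert a E) s.card
          = (lw p E (s.erase a) / lv p E (s.erase a).card) *
              ∑ k ∈ Finset.range s.card, β k := by
      intro s hs
      simp only [Finset.mem_filter] at hs
      have hins : insert a (s.erase a) = s := Finset.insert_erase hs.2
      have huE : s.erase a ⊆ E := by
        have h1 : s ⊆ insert a E := Finset.mem_powerset.1 (hAE hs.1)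
        have := Finset.erase_subset_erase a h1
        rwa [Finset.erase_insert ha] at this
      have hm : (s.erase a).card ≤ E.card := Finset.card_le_card huE
      have hsc : s.card = (s.erase a).card + 1 := by
        rw [← hins, Finset.card_insert_of_notMem (Finset.notMem_erase a s)]
        rw [hins]
      set m := (s.erase a).card with hmdef
      have hrange : ∑ k ∈ Finset.range s.card, β k = 1 - g (m + 1) := by
        have h1 : ∑ k ∈ Finset.Ico 0 (m+1), β k + ∑ k ∈ Finset.Ico (m+1) N, β k
            = ∑ k ∈ Finset.Ico 0 N, β k :=
          Finset.sum_Ico_consecutive β (by omega) (by omega)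
        rw [tele (m+1) (by omega), ← Finset.range_eq_Ico, ← Finset.range_eq_Ico, hsumβ] at h1
        rw [hsc]
        linarith
      rw [hrange, hsc]
      have hlw : lw p (insert a E) s = p a * lw p E (s.erase a) := by
        conv_lhs => rw [← hins]
        exact lw_insert_mem ha huE
      rw [hlw, lv_insert_succ ha m]
      simp only [hgdef]
      rw [lv_insert_succ ha m]
      have w : lv p E m ≠ 0 := (hlvpos _ hm).ne'
      have w' : (1 - p a) * lv p E (m + 1) + p a * lv p E m ≠ 0 := by
        have := hlv'pos (m + 1) (by omega)
        rw [lv_insert_succ ha m] at this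
        exact this.ne'
      field_simp
      ring
    -- swap sums
    have hA1card : ∀ s ∈ A.filter (fun s => a ∈ s), s.card ≤ N := by
      intro s hs
      simp only [Finset.mem_filter] at hs
      have := Finset.card_le_card (Finset.mem_powerset.1 (hAE hs.1))
      omega
    have swap0 : ∑ s ∈ A.filter (fun s => a ∉ s),
        (lw p E s / lv p E s.card) * ∑ k ∈ Finset.Ico s.card N, β k
        = ∑ k ∈ Finset.range N,
            (∑ s ∈ (A.filter (fun s => a ∉ s)).filter (fun s => s.card ≤ k),
              lw p E s / lv p E s.card) * β k := by
      have step : ∀ s ∈ A.filter (fun s => a ∉ s),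
          (lw p E s / lv p E s.card) * ∑ k ∈ Finset.Ico s.card N, β k
          = ∑ k ∈ Finset.range N,
              if s.card ≤ k then (lw p E s / lv p E s.card) * β k else 0 := by
        intro s hs
        have hIco : Finset.Ico s.card N = (Finset.range N).filter (fun k => s.card ≤ k) := by
          ext k
          simp only [Finset.mem_Ico, Finset.mem_filter, Finset.mem_range]
          tauto
        rw [Finset.mul_sum, hIco, Finset.sum_filter]
      rw [Finset.sum_congr rfl step, Finset.sum_comm]
      refine Finset.sum_congr rfl fun k _ => ?_
      rw [← Finset.sum_filter, ← Finset.sum_mul]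
    have swap1 : ∑ s ∈ A.filter (fun s => a ∈ s),
        (lw p E (s.erase a) / lv p E (s.erase a).card) * ∑ k ∈ Finset.range s.card, β k
        = ∑ k ∈ Finset.range N,
            (∑ s ∈ (A.filter (fun s => a ∈ s)).filter (fun s => k < s.card),
              lw p E (s.erase a) / lv p E (s.erase a).card) * β k := by
      have step : ∀ s ∈ A.filter (fun s => a ∈ s),
          (lw p E (s.erase a) / lv p E (s.erase a).card) * ∑ k ∈ Finset.range s.card, β k
          = ∑ k ∈ Finset.range N,
              if k < s.card then (lw p E (s.erase a) / lv p E (s.erase a).card) * β k else 0 := by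
        intro s hs
        have h1 := hA1card s hs
        have hIco : Finset.range s.card = (Finset.range N).filter (fun k => k < s.card) := by
          ext k
          simp only [Finset.mem_filter, Finset.mem_range]
          omega
        rw [Finset.mul_sum, hIco, Finset.sum_filter]
      rw [Finset.sum_congr rfl step, Finset.sum_comm]
      refine Finset.sum_congr rfl fun k _ => ?_
      rw [← Finset.sum_filter, ← Finset.sum_mul]
    -- per-k antichain bound via the induction hypothesis
    have hT : ∀ k : ℕ,
        (∑ s ∈ (A.filter (fun s => a ∈ s)).filter (fun s => k < s.card),
          lw p E (s.erase a) / lv p E (s.erase a).card)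
        + (∑ s ∈ (A.filter (fun s => a ∉ s)).filter (fun s => s.card ≤ k),
          lw p E s / lv p E s.card) ≤ 1 := by
      intro k
      set A1k := (A.filter (fun s => a ∈ s)).filter (fun s => k < s.card) with hA1k
      set A0k := (A.filter (fun s => a ∉ s)).filter (fun s => s.card ≤ k) with hA0k
      have hmemA1 : ∀ s ∈ A1k, s ∈ A ∧ a ∈ s ∧ k < s.card := by
        intro s hs
        rw [hA1k, Finset.mem_filter, Finset.mem_filter] at hs
        tauto
      have hmemA0 : ∀ s ∈ A0k, s ∈ A ∧ a ∉ s ∧ s.card ≤ k := by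
        intro s hs
        rw [hA0k, Finset.mem_filter, Finset.mem_filter] at hs
        tauto
      have hinj : ∀ s ∈ A1k, ∀ t ∈ A1k, s.erase a = t.erase a → s = t := by
        intro s hsm t htm h
        have h1 := (hmemA1 s hsm).2.1
        have h2 := (hmemA1 t htm).2.1
        rw [← Finset.insert_erase h1, ← Finset.insert_erase h2, h]
      have himg : ∑ u ∈ A1k.image (fun s => s.erase a), lw p E u / lv p E u.card
          = ∑ s ∈ A1k, lw p E (s.erase a) / lv p E (s.erase a).card :=
        Finset.sum_image hinj
      have hdisj : Disjoint (A1k.image (fun s => s.erase a)) A0k := by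
        rw [Finset.disjoint_left]
        rintro u hu hu0
        obtain ⟨s, hsm, rfl⟩ := Finset.mem_image.1 hu
        obtain ⟨hsA, hsa, _⟩ := hmemA1 s hsm
        obtain ⟨huA, hua, _⟩ := hmemA0 _ hu0
        have hne : s.erase a ≠ s := by
          intro h
          rw [h] at hua
          exact hua hsa
        exact hA (Finset.mem_coe.2 huA) (Finset.mem_coe.2 hsA) hne (Finset.erase_subset a s)
      set B := (A1k.image (fun s => s.erase a)) ∪ A0k with hB
      have hBsub : B ⊆ E.powerset := by
        intro u hu
        rw [Finset.mem_powerset]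
        rcases Finset.mem_union.1 hu with hu | hu
        · obtain ⟨s, hsm, rfl⟩ := Finset.mem_image.1 hu
          obtain ⟨hsA, _, _⟩ := hmemA1 s hsm
          have h1 : s ⊆ insert a E := Finset.mem_powerset.1 (hAE hsA)
          have := Finset.erase_subset_erase a h1
          rwa [Finset.erase_insert ha] at this
        · obtain ⟨huA, hua, _⟩ := hmemA0 u hu
          exact (Finset.subset_insert_iff_of_notMem hua).1 (Finset.mem_powerset.1 (hAE huA))
      have hBanti : IsAntichain (· ⊆ ·) (B : Set (Finset ι)) := by
        intro u hu v hv hne hsub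
        rw [Finset.mem_coe, hB, Finset.mem_union] at hu hv
        rcases hu with hu | hu <;> rcases hv with hv | hv
        · obtain ⟨s, hsm, rfl⟩ := Finset.mem_image.1 hu
          obtain ⟨t, htm, rfl⟩ := Finset.mem_image.1 hv
          obtain ⟨hsA, hsa, _⟩ := hmemA1 s hsm
          obtain ⟨htA, hta, _⟩ := hmemA1 t htm
          have hst : s ⊆ t := by
            have := Finset.insert_subset_insert a hsub
            rwa [Finset.insert_erase hsa, Finset.insert_erase hta] at this
          have hnest : s ≠ t := fun h => hne (by rw [h])
          exact hA (Finset.mem_coe.2 hsA) (Finset.mem_coe.2 htA) hnest hst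
        · obtain ⟨s, hsm, rfl⟩ := Finset.mem_image.1 hu
          obtain ⟨hsA, hsa, hsk⟩ := hmemA1 s hsm
          obtain ⟨hvA, hva, hvk⟩ := hmemA0 v hv
          have hce : (s.erase a).card = s.card - 1 := Finset.card_erase_of_mem hsa
          have hcard : v.card ≤ (s.erase a).card := by omega
          exact hne (Finset.eq_of_subset_of_card_le hsub hcard)
        · obtain ⟨t, htm, rfl⟩ := Finset.mem_image.1 hv
          obtain ⟨htA, hta, _⟩ := hmemA1 t htm
          obtain ⟨huA, hua, _⟩ := hmemA0 u hu
          have hut : u ⊆ t := hsub.trans (Finset.erase_subset a t)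
          have hne' : u ≠ t := by
            intro h
            rw [h] at hua
            exact hua hta
          exact hA (Finset.mem_coe.2 huA) (Finset.mem_coe.2 htA) hne' hut
        · exact hA (Finset.mem_coe.2 (hmemA0 u hu).1) (Finset.mem_coe.2 (hmemA0 v hv).1)
            hne hsub
      have hIH := IH hpE B hBsub hBanti
      rw [hB, Finset.sum_union hdisj, himg] at hIH
      exact hIH
    -- put everything together
    calc ∑ s ∈ A, lw p (insert a E) s / lv p (insert a E) s.card
        = (∑ s ∈ A.filter (fun s => a ∈ s),
            lw p (insert a E) s / lv p (insert a E) s.card)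
          + ∑ s ∈ A.filter (fun s => a ∉ s),
            lw p (insert a E) s / lv p (insert a E) s.card :=
          (Finset.sum_filter_add_sum_filter_not A _ _).symm
      _ = (∑ s ∈ A.filter (fun s => a ∈ s),
            (lw p E (s.erase a) / lv p E (s.erase a).card) * ∑ k ∈ Finset.range s.card, β k)
          + ∑ s ∈ A.filter (fun s => a ∉ s),
            (lw p E s / lv p E s.card) * ∑ k ∈ Finset.Ico s.card N, β k := by
          rw [Finset.sum_congr rfl key1, Finset.sum_congr rfl key0]
      _ = ∑ k ∈ Finset.range N,
            ((∑ s ∈ (A.filter (fun s => a ∈ s)).filter (fun s => k < s.card),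
              lw p E (s.erase a) / lv p E (s.erase a).card)
            + (∑ s ∈ (A.filter (fun s => a ∉ s)).filter (fun s => s.card ≤ k),
              lw p E s / lv p E s.card)) * β k := by
          rw [swap1, swap0, ← Finset.sum_add_distrib]
          exact Finset.sum_congr rfl fun k _ => by ring
      _ ≤ ∑ k ∈ Finset.range N, β k := by
          refine Finset.sum_le_sum fun k _ => ?_
          exact mul_le_of_le_one_left (hβnn k) (hT k)
      _ = 1 := hsumβ


end LymAux

/-- **LYM inequality for product measures.**  If `P` is a non-trivial product
distribution on `{0,1}^n` and `A` is an antichain, then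
`∑_{ℓ=0}^n Pr[z ∈ A | |z| = ℓ] ≤ 1`. -/
theorem lym_product_measure (n : ℕ) (p : Fin n → ℝ)
    (hp : ∀ j, 0 < p j ∧ p j < 1)
    (A : Finset (Finset (Fin n)))
    (hA : IsAntichain (· ⊆ ·) (A : Set (Finset (Fin n)))) :
    ∑ ℓ ∈ Finset.range (n + 1),
      (∑ s ∈ A.filter (fun s => s.card = ℓ), prodWeight p s) /
        (∑ s ∈ Finset.univ.filter (fun s : Finset (Fin n) => s.card = ℓ),
          prodWeight p s) ≤ 1 := by
  classical
  have hw : ∀ s : Finset (Fin n), prodWeight p s = LymAux.lw p Finset.univ s := by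
    intro s
    unfold prodWeight LymAux.lw
    rw [Finset.compl_eq_univ_sdiff]
  have hlv : ∀ ℓ : ℕ,
      (∑ s ∈ Finset.univ.filter (fun s : Finset (Fin n) => s.card = ℓ), prodWeight p s)
        = LymAux.lv p Finset.univ ℓ := by
    intro ℓ
    unfold LymAux.lv
    rw [Finset.powerset_univ]
    exact Finset.sum_congr rfl fun s _ => hw s
  calc ∑ ℓ ∈ Finset.range (n + 1),
      (∑ s ∈ A.filter (fun s => s.card = ℓ), prodWeight p s) /
        (∑ s ∈ Finset.univ.filter (fun s : Finset (Fin n) => s.card = ℓ),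
          prodWeight p s)
      = ∑ ℓ ∈ Finset.range (n + 1), ∑ s ∈ A.filter (fun s => s.card = ℓ),
          LymAux.lw p Finset.univ s / LymAux.lv p Finset.univ s.card := by
        refine Finset.sum_congr rfl fun ℓ _ => ?_
        rw [hlv ℓ, Finset.sum_div]
        refine Finset.sum_congr rfl fun s hs => ?_
        rw [hw s, (Finset.mem_filter.1 hs).2]
    _ = ∑ s ∈ A, LymAux.lw p Finset.univ s / LymAux.lv p Finset.univ s.card := by
        refine Finset.sum_fiberwise_of_maps_to (fun s _ => Finset.mem_range.2 ?_) _
        have := Finset.card_le_univ s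
        simp only [Finset.card_univ, Fintype.card_fin] at this
        omega
    _ ≤ 1 := LymAux.main p Finset.univ (fun j _ => hp j) A
        (fun s _ => Finset.mem_powerset.2 (Finset.subset_univ s)) hA
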